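/- Let p be a prime, A a reduced commutative ring with p·1_A = 0, n ≥ 1, t ≥ 1, and X ∈ Σ_{1,t} ⊆ M_n(W(A)). Let d ≥ 0 and v ≥ 1 be integers with v ≥ t·d, and let Z ∈ M_n(W(A)) be the unique matrix with v!·Z = X^v. Then Z lies entrywise in V^{d+1}, i.e. coeff_j of every entry of Z vanishes for all j ≤ d. -/

import Mathlib

/-- The matrix of `j`-th Witt coordinates of a matrix of Witt vectors. -/
def wittPi (p : ℕ) {A : Type*} {n : ℕ} (j : ℕ)
    (X : Matrix (Fin n) (Fin n) (WittVector p A)) : Matrix (Fin n) (Fin n) A :=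
  X.map fun w => w.coeff j

/-- `Σ_{1,t}`: matrices of Witt vectors whose `0`-th Witt coordinate matrix vanishes and whose
`1`-st Witt coordinate matrix is `t`-step nilpotent. -/
def SigmaOneT (p : ℕ) {A : Type*} [CommRing A] {n : ℕ} (t : ℕ) :
    Set (Matrix (Fin n) (Fin n) (WittVector p A)) :=
  {X | wittPi p 0 X = 0 ∧ wittPi p 1 X ^ t = 0}

/-- A matrix of Witt vectors lies entrywise in `V^d` if the `j`-th Witt coordinates of all its
entries vanish for all `j < d`. -/
def EntrywiseV (p : ℕ) {A : Type*} [Zero A] {n : ℕ} (d : ℕ)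
    (X : Matrix (Fin n) (Fin n) (WittVector p A)) : Prop :=
  ∀ j < d, wittPi p j X = 0

namespace WittAux

open WittVector Function

variable {p : ℕ} [hp : Fact p.Prime] {A : Type*} [CommRing A]

lemma itV_add (k : ℕ) (x y : WittVector p A) :
    verschiebung^[k] (x + y) = verschiebung^[k] x + verschiebung^[k] y := by
  induction k generalizing x y with
  | zero => rfl
  | succ k ih =>
    rw [iterate_succ_apply, iterate_succ_apply, iterate_succ_apply, map_add, ih]

/-- Iterated Verschiebung, as an additive monoid hom. -/
noncomputable def itVHom (k : ℕ) : WittVector p A →+ WittVector p A :=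
  AddMonoidHom.mk' (fun x => verschiebung^[k] x) (itV_add k)

@[simp] lemma itVHom_apply (k : ℕ) (x : WittVector p A) :
    itVHom k x = verschiebung^[k] x := rfl

lemma itF_add (k : ℕ) (x y : WittVector p A) :
    frobenius^[k] (x + y) = frobenius^[k] x + frobenius^[k] y := by
  induction k generalizing x y with
  | zero => rfl
  | succ k ih =>
    rw [iterate_succ_apply, iterate_succ_apply, iterate_succ_apply, map_add, ih]

lemma itF_mul (k : ℕ) (x y : WittVector p A) :
    frobenius^[k] (x * y) = frobenius^[k] x * frobenius^[k] y := by
  induction k generalizing x y with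
  | zero => rfl
  | succ k ih =>
    rw [iterate_succ_apply, iterate_succ_apply, iterate_succ_apply, map_mul, ih]

/-- Iterated Frobenius, as an additive monoid hom. -/
noncomputable def itFHom (k : ℕ) : WittVector p A →+ WittVector p A :=
  AddMonoidHom.mk' (fun x => frobenius^[k] x) (itF_add k)

@[simp] lemma itFHom_apply (k : ℕ) (x : WittVector p A) :
    itFHom k x = frobenius^[k] x := rfl

lemma coeff_itV_of_lt {k j : ℕ} (hj : j < k) (y : WittVector p A) :
    (verschiebung^[k] y).coeff j = 0 := by
  induction k generalizing j y with
  | zero => omega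
  | succ k ih =>
    rw [iterate_succ_apply']
    cases j with
    | zero => exact verschiebung_coeff_zero _
    | succ j => rw [verschiebung_coeff_succ]; exact ih (by omega) _

lemma exists_verschiebung (x : WittVector p A) (h : x.coeff 0 = 0) :
    ∃ y, x = verschiebung y := by
  refine ⟨WittVector.mk p (fun i => x.coeff (i + 1)), ?_⟩
  ext m
  cases m with
  | zero => rw [verschiebung_coeff_zero, h]
  | succ m => rw [verschiebung_coeff_succ]; simp [WittVector.coeff_mk]

lemma exists_iterate_verschiebung (d : ℕ) (x : WittVector p A)
    (h : ∀ j < d, x.coeff j = 0) : ∃ y, x = verschiebung^[d] y := by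
  induction d generalizing x with
  | zero => exact ⟨x, rfl⟩
  | succ d ih =>
    obtain ⟨y, rfl⟩ := ih x (fun j hj => h j (by omega))
    have hy : y.coeff 0 = 0 := by
      have h0 := iterate_verschiebung_coeff (p := p) (R := A) y d 0
      rw [zero_add] at h0
      rw [← h0]
      exact h d (Nat.lt_succ_self d)
    obtain ⟨z, rfl⟩ := exists_verschiebung y hy
    exact ⟨z, by rw [iterate_succ_apply]⟩

lemma mul_coeff_eq_zero {d : ℕ} {y : WittVector p A} (hy : ∀ j < d, y.coeff j = 0)
    (x : WittVector p A) : ∀ j < d, (x * y).coeff j = 0 := by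
  obtain ⟨w, rfl⟩ := exists_iterate_verschiebung d y hy
  intro j hj
  rw [mul_comm, iterate_verschiebung_mul_left]
  exact coeff_itV_of_lt hj _

lemma add_coeff_eq_zero {d : ℕ} {x y : WittVector p A} (hx : ∀ j < d, x.coeff j = 0)
    (hy : ∀ j < d, y.coeff j = 0) : ∀ j < d, (x + y).coeff j = 0 := by
  obtain ⟨w, rfl⟩ := exists_iterate_verschiebung d x hx
  obtain ⟨u, rfl⟩ := exists_iterate_verschiebung d y hy
  intro j hj
  rw [← itV_add]
  exact coeff_itV_of_lt hj _

lemma sum_coeff_eq_zero {ι : Type*} {d : ℕ} (s : Finset ι) (f : ι → WittVector p A)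
    (h : ∀ i ∈ s, ∀ j < d, (f i).coeff j = 0) :
    ∀ j < d, (∑ i ∈ s, f i).coeff j = 0 := by
  classical
  induction s using Finset.induction_on with
  | empty => intro j hj; simp
  | insert _ _ hmem ih =>
    rw [Finset.sum_insert hmem]
    exact add_coeff_eq_zero (h _ (Finset.mem_insert_self _ _))
      (ih fun i hi => h i (Finset.mem_insert_of_mem hi))

section CharP

variable [CharP A p]

lemma mul_pow_p (x : WittVector p A) (a : ℕ) :
    x * (p : WittVector p A) ^ a = verschiebung^[a] (frobenius^[a] x) := by
  induction a generalizing x with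
  | zero => simp
  | succ a ih =>
    calc x * (p : WittVector p A) ^ (a + 1)
        = (x * (p : WittVector p A)) * (p : WittVector p A) ^ a := by ring
      _ = verschiebung^[a] (frobenius^[a] (x * (p : WittVector p A))) := ih _
      _ = verschiebung^[a] (frobenius^[a] (verschiebung (frobenius x))) := by
          rw [verschiebung_frobenius]
      _ = verschiebung^[a] (verschiebung (frobenius^[a] (frobenius x))) := by
          rw [(verschiebung_frobenius_comm.iterate_right a (frobenius x))]
      _ = verschiebung^[a + 1] (frobenius^[a + 1] x) := by
          rw [← iterate_succ_apply, ← iterate_succ_apply]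

lemma pow_mul_smul (k m : ℕ) (z : WittVector p A) :
    (p ^ k * m) • z = verschiebung^[k] (frobenius^[k] (m • z)) := by
  rw [mul_smul, nsmul_eq_mul, Nat.cast_pow, mul_comm, mul_pow_p]

lemma summand (v : ℕ) (a b : WittVector p A) :
    verschiebung^[v + 1] (frobenius^[v] a) * verschiebung b
      = verschiebung^[v + 2] (frobenius^[v + 1] (a * b)) := by
  have h := iterate_verschiebung_mul (p := p) (frobenius^[v] a) b (v + 1) 1
  rw [show verschiebung b = verschiebung^[1] b from rfl, h, itF_mul,
    ← iterate_add_apply, Nat.add_comm 1 v]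

lemma map_verschiebung_pow {n : ℕ} (N : Matrix (Fin n) (Fin n) (WittVector p A)) (v : ℕ) :
    (N.map fun x => verschiebung x) ^ (v + 1)
      = (N ^ (v + 1)).map fun y => verschiebung^[v + 1] (frobenius^[v] y) := by
  induction v with
  | zero =>
    ext i j
    simp [pow_one]
  | succ v ih =>
    rw [pow_succ, ih]
    refine Matrix.ext fun i j => ?_
    simp only [Matrix.map_apply, Matrix.mul_apply]
    have hpow : (N ^ (v + 1 + 1)) i j = ∑ k, (N ^ (v + 1)) i k * N k j := by
      rw [pow_succ, Matrix.mul_apply]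
    rw [hpow]
    have hs := map_sum ((itVHom (p := p) (A := A) (v + 2)).comp (itFHom (v + 1)))
      (fun k => (N ^ (v + 1)) i k * N k j) Finset.univ
    simp only [AddMonoidHom.coe_comp, comp_apply, itVHom_apply, itFHom_apply] at hs
    rw [show ((v + 1 : ℕ) + 1) = v + 2 from rfl, hs]
    exact Finset.sum_congr rfl fun k _ => summand v _ _

end CharP

lemma coeff_eq_zero_of_smul {m : ℕ} (hm : IsUnit (m : A)) (z : WittVector p A) (d : ℕ)
    (h : ∀ j < d, (m • z).coeff j = 0) : ∀ j < d, z.coeff j = 0 := by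
  induction d generalizing z with
  | zero => intro j hj; omega
  | succ d ih =>
    have h' : ∀ j < d, z.coeff j = 0 := ih z (fun j hj => h j (by omega))
    intro j hj
    rcases Nat.lt_or_ge j d with hjd | hjd
    · exact h' j hjd
    · have hjd' : j = d := by omega
      rw [hjd']
      obtain ⟨y, rfl⟩ := exists_iterate_verschiebung d z h'
      have hz : m • verschiebung^[d] y = verschiebung^[d] (m • y) := by
        have h6 := map_nsmul (itVHom (p := p) (A := A) d) m y
        simpa using h6.symm
      have h0 := h d (by omega)
      rw [hz] at h0
      have h1 : (verschiebung^[d] (m • y)).coeff (0 + d) = (m • y).coeff 0 :=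
        iterate_verschiebung_coeff _ _ _
      rw [zero_add] at h1
      rw [h1] at h0
      have h3 : (m • y).coeff 0 = (m : A) * y.coeff 0 := by
        have h7 := map_nsmul (WittVector.constantCoeff : WittVector p A →+* A) m y
        simpa [nsmul_eq_mul] using h7
      rw [h3] at h0
      have h4 := (hm.mul_right_eq_zero).mp h0
      have h5 : (verschiebung^[d] y).coeff (0 + d) = y.coeff 0 :=
        iterate_verschiebung_coeff _ _ _
      rw [zero_add] at h5
      rw [h5, h4]

end WittAux

/-- If `X ∈ Σ_{1,t}` and `v ≥ t·d` with `v ≥ 1`, then the matrix `Z = X^v / v!` lies entrywise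
in `V^{d+1}`. -/
theorem div_factorial_pow_sigmaOneT_mem_verschiebung (p : ℕ) [Fact p.Prime] (A : Type*)
    [CommRing A] [CharP A p] [IsReduced A] (n t : ℕ) (hn : 1 ≤ n) (ht : 1 ≤ t)
    (X : Matrix (Fin n) (Fin n) (WittVector p A)) (hX : X ∈ SigmaOneT p t)
    (d v : ℕ) (hv : 1 ≤ v) (hvd : t * d ≤ v)
    (Z : Matrix (Fin n) (Fin n) (WittVector p A)) (hZ : v.factorial • Z = X ^ v) :
    EntrywiseV p (d + 1) Z := by
  have hprime : p.Prime := Fact.out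
  obtain ⟨hX0, hX1⟩ := hX
  obtain ⟨v, rfl⟩ : ∃ v', v = v' + 1 := ⟨v - 1, by omega⟩
  -- deshift the entries of X
  have hXc : ∀ i j, (X i j).coeff 0 = 0 := by
    intro i j
    have h := congrFun (congrFun hX0 i) j
    simpa [wittPi, Matrix.map_apply] using h
  obtain ⟨Y, hY⟩ : ∃ Y : Matrix (Fin n) (Fin n) (WittVector p A),
      ∀ i j, X i j = WittVector.verschiebung (Y i j) := by
    choose Y hY using fun i j => WittAux.exists_verschiebung (X i j) (hXc i j)
    exact ⟨Matrix.of Y, hY⟩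
  have hXY : X = Y.map fun x => WittVector.verschiebung x := by
    refine Matrix.ext fun i j => ?_
    rw [Matrix.map_apply]; exact hY i j
  have hpi : wittPi p 0 Y ^ t = 0 := by
    have e : wittPi p 1 X = wittPi p 0 Y := by
      refine Matrix.ext fun i j => ?_
      simp only [wittPi, Matrix.map_apply]
      rw [hY i j]
      exact WittVector.verschiebung_coeff_succ (Y i j) 0
    rw [← e]; exact hX1
  have hYt : ∀ i j, ((Y ^ t) i j).coeff 0 = 0 := by
    have key : wittPi p 0 (Y ^ t) = (wittPi p 0 Y) ^ t := by
      have h3 : ∀ M : Matrix (Fin n) (Fin n) (WittVector p A),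
          wittPi p 0 M = (WittVector.constantCoeff : WittVector p A →+* A).mapMatrix M := by
        intro M
        refine Matrix.ext fun i j => ?_
        simp [wittPi, RingHom.mapMatrix_apply, Matrix.map_apply]
      rw [h3, h3, map_pow]
    intro i j
    have h := congrFun (congrFun (key.trans (by rw [hpi])) i) j
    simpa [wittPi, Matrix.map_apply] using h
  obtain ⟨U, hU⟩ : ∃ U : Matrix (Fin n) (Fin n) (WittVector p A),
      ∀ i j, (Y ^ t) i j = WittVector.verschiebung (U i j) := by
    choose U hU using fun i j => WittAux.exists_verschiebung ((Y ^ t) i j) (hYt i j)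
    exact ⟨Matrix.of U, hU⟩
  have hYtU : Y ^ t = U.map fun x => WittVector.verschiebung x := by
    refine Matrix.ext fun i j => ?_
    rw [Matrix.map_apply]; exact hU i j
  -- `Y ^ (v+1)` has entrywise Verschiebung-depth `d`
  have hYv : ∀ i j, ∀ j' < d, ((Y ^ (v + 1)) i j).coeff j' = 0 := by
    rcases Nat.eq_zero_or_pos d with hd | hd
    · subst hd; intro i j j' h; omega
    · obtain ⟨e, rfl⟩ : ∃ e, d = e + 1 := ⟨d - 1, by omega⟩
      have hsplit : Y ^ (v + 1) = Y ^ (v + 1 - t * (e + 1)) * (Y ^ t) ^ (e + 1) := by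
        rw [← pow_mul, ← pow_add]
        congr 1
        omega
      have hdepth : ∀ k j, ∀ j' < e + 1, (((Y ^ t) ^ (e + 1)) k j).coeff j' = 0 := by
        intro k j j' hj'
        rw [hYtU, WittAux.map_verschiebung_pow, Matrix.map_apply]
        exact WittAux.coeff_itV_of_lt (by omega) _
      intro i j j' hj'
      rw [hsplit, Matrix.mul_apply]
      refine WittAux.sum_coeff_eq_zero _ _ ?_ j' hj'
      intro k _
      exact WittAux.mul_coeff_eq_zero (hdepth k j) _
  -- the formula for `X ^ (v+1)`
  have hXv : X ^ (v + 1)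
      = (Y ^ (v + 1)).map
          fun y => WittVector.verschiebung^[v + 1] (WittVector.frobenius^[v] y) := by
    rw [hXY]; exact WittAux.map_verschiebung_pow Y v
  -- factorial decomposition
  set a := ((v + 1).factorial).factorization p with ha
  set m := (v + 1).factorial / p ^ a with hm
  have hfac : p ^ a * m = (v + 1).factorial := Nat.ordProj_mul_ordCompl_eq_self _ p
  have hmp : ¬ p ∣ m := Nat.not_dvd_ordCompl hprime (Nat.factorial_ne_zero _)
  have hav : a < v + 1 := by
    have h1 := Nat.Prime.sub_one_mul_multiplicity_factorial (n := v + 1) hprime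
    have h2 : multiplicity p (v + 1).factorial = a :=
      Nat.multiplicity_eq_factorization hprime (Nat.factorial_ne_zero _)
    rw [h2] at h1
    have hnil : p.digits (v + 1) ≠ [] := Nat.digits_ne_nil_iff_ne_zero.mpr (by omega)
    have hlast := Nat.getLast_digit_ne_zero p (show v + 1 ≠ 0 by omega)
    have hmem := List.getLast_mem hnil
    have hsum : 1 ≤ (p.digits (v + 1)).sum := by
      have h8 := List.le_sum_of_mem hmem
      omega
    have h3 : a ≤ (p - 1) * a := Nat.le_mul_of_pos_left a (by have := hprime.two_le; omega)
    have h4 : (p - 1) * a ≤ v := by rw [h1]; omega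
    omega
  -- kill the coefficients of `m • Z`
  have hmZ : ∀ i j, ∀ j' < d + 1, ((m • Z i j)).coeff j' = 0 := by
    intro i j
    have hent : (v + 1).factorial • Z i j
        = WittVector.verschiebung^[v + 1]
            (WittVector.frobenius^[v] ((Y ^ (v + 1)) i j)) := by
      have h := congrFun (congrFun hZ i) j
      rw [hXv] at h
      simpa [Matrix.map_apply] using h
    have hFd : ∀ j' < d, (WittVector.frobenius^[v] ((Y ^ (v + 1)) i j)).coeff j' = 0 := by
      intro j' hj'
      rw [WittVector.iterate_frobenius_coeff, hYv i j j' hj', zero_pow]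
      exact (pow_pos hprime.pos v).ne'
    obtain ⟨u, hu⟩ := WittAux.exists_iterate_verschiebung d _ hFd
    have hent2 : (v + 1).factorial • Z i j = WittVector.verschiebung^[(v + 1) + d] u := by
      rw [hent, hu, ← Function.iterate_add_apply]
    have hent3 : WittVector.verschiebung^[a] (WittVector.frobenius^[a] (m • Z i j))
        = WittVector.verschiebung^[(v + 1) + d] u := by
      rw [← WittAux.pow_mul_smul, hfac, hent2]
    intro j' hj'
    have hc := congrArg (fun w => WittVector.coeff w (j' + a)) hent3
    rw [WittVector.iterate_verschiebung_coeff] at hc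
    rw [WittVector.iterate_frobenius_coeff] at hc
    rw [WittAux.coeff_itV_of_lt (show j' + a < (v + 1) + d by omega)] at hc
    exact IsNilpotent.eq_zero ⟨p ^ a, hc⟩
  -- `m` is a unit in `A`
  have hunit : IsUnit (m : A) := by
    have h0 : (m : ZMod p) ≠ 0 := by
      rw [Ne, ZMod.natCast_eq_zero_iff]; exact hmp
    have h1 : IsUnit (m : ZMod p) := isUnit_iff_ne_zero.mpr h0
    have h2 := h1.map (ZMod.castHom (dvd_refl p) A)
    rwa [map_natCast] at h2
  intro j' hj'
  refine Matrix.ext fun i j => ?_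
  simp only [wittPi, Matrix.map_apply, Matrix.zero_apply]
  exact WittAux.coeff_eq_zero_of_smul hunit (Z i j) (d + 1) (hmZ i j) j' hj'
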